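/- Let q₁,…,q₈ ∈ ℝ³, not all equal, and suppose there exist λ ≠ 0 and c ∈ ℝ³ with Y_i(q) = λ q_i + c for i = 1,…,8, where Y is the hexahedron vector field. Then (q₁,…,q₈) is a cube: there exist r > 0, an orthogonal linear map R of ℝ³, and b ∈ ℝ³ such that q₁ = r·R(0,0,0)+b, q₂ = r·R(1,0,0)+b, q₃ = r·R(1,1,0)+b, q₄ = r·R(0,1,0)+b, q₅ = r·R(0,0,1)+b, q₆ = r·R(1,0,1)+b, q₇ = r·R(1,1,1)+b, q₈ = r·R(0,1,1)+b. -/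

import Mathlib

open scoped RealInnerProductSpace

noncomputable section

/-- Euclidean 3-space with the standard inner product. -/
abbrev E3 : Type := EuclideanSpace ℝ (Fin 3)

/-- The cross product on `ℝ³`. -/
def cross (a b : E3) : E3 :=
  WithLp.toLp 2 ![a 1 * b 2 - a 2 * b 1, a 2 * b 0 - a 0 * b 2, a 0 * b 1 - a 1 * b 0]

/-- `ν(a,b,c)` for a 3-cycle. -/
def nu3 (a b c : E3) : E3 := cross a b + cross b c + cross c a

/-- `ν(a,b,c,d)` for a 4-cycle. -/
def nu4 (a b c d : E3) : E3 := cross a b + cross b c + cross c d + cross d a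

/-- `ν(a,b,c,d,e)` for a 5-cycle. -/
def nu5 (a b c d e : E3) : E3 :=
  cross a b + cross b c + cross c d + cross d e + cross e a

/-- `ν(a,b,c,d,e,f)` for a 6-cycle. -/
def nu6 (a b c d e f : E3) : E3 :=
  cross a b + cross b c + cross c d + cross d e + cross e f + cross f a

/-- The signed volume of a tetrahedron. -/
def tvol (p₁ p₂ p₃ p₄ : E3) : ℝ :=
  (1 / 6) * ⟪cross (p₂ - p₁) (p₃ - p₁), p₄ - p₁⟫

/-- The point `(x, y, z)` of `ℝ³`. -/
def v3 (x y z : ℝ) : E3 := WithLp.toLp 2 ![x, y, z]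

private lemma crossZeroLeft (b : E3) : cross 0 b = 0 := by
  ext i; fin_cases i <;> simp [cross]

private lemma crossZeroRight (a : E3) : cross a 0 = 0 := by
  ext i; fin_cases i <;> simp [cross]

private lemma innerCrossSelfLeft (a b : E3) : ⟪a, cross a b⟫ = 0 := by
  simp [cross, PiLp.inner_apply, Fin.sum_univ_three, RCLike.inner_apply, starRingEnd_apply]
  ring

private lemma innerCrossSelfRight (a b : E3) : ⟪b, cross a b⟫ = 0 := by
  simp [cross, PiLp.inner_apply, Fin.sum_univ_three, RCLike.inner_apply, starRingEnd_apply]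
  ring

private lemma innerCrossCross (a b : E3) :
    ⟪cross a b, cross a b⟫ = ⟪a,a⟫ * ⟪b,b⟫ - ⟪a,b⟫^2 := by
  simp only [PiLp.inner_apply]
  simp [cross, PiLp.inner_apply, Fin.sum_univ_three, RCLike.inner_apply, starRingEnd_apply]
  ring

private lemma v3Decomp (x y z : ℝ) : v3 x y z = x • EuclideanSpace.single 0 (1:ℝ) +
    y • EuclideanSpace.single 1 (1:ℝ) + z • EuclideanSpace.single 2 (1:ℝ) := by
  ext i; fin_cases i <;> simp [v3, EuclideanSpace.single_apply]


set_option maxHeartbeats 4000000 in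
theorem optimal_hexahedron_is_cube (q₁ q₂ q₃ q₄ q₅ q₆ q₇ q₈ : E3)
    (hne : ¬ (q₁ = q₂ ∧ q₁ = q₃ ∧ q₁ = q₄ ∧ q₁ = q₅ ∧ q₁ = q₆ ∧ q₁ = q₇ ∧ q₁ = q₈))
    (lam : ℝ) (hlam : lam ≠ 0) (c : E3)
    (h₁ : (1 / 2 : ℝ) • (nu3 q₃ q₆ q₈ + nu3 q₂ q₅ q₄ + nu6 q₆ q₅ q₈ q₄ q₃ q₂) = lam • q₁ + c)
    (h₂ : (1 / 2 : ℝ) • (nu3 q₄ q₇ q₅ + nu3 q₃ q₆ q₁ + nu6 q₇ q₆ q₅ q₁ q₄ q₃) = lam • q₂ + c)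
    (h₃ : (1 / 2 : ℝ) • (nu3 q₁ q₈ q₆ + nu3 q₄ q₇ q₂ + nu6 q₈ q₇ q₆ q₂ q₁ q₄) = lam • q₃ + c)
    (h₄ : (1 / 2 : ℝ) • (nu3 q₂ q₅ q₇ + nu3 q₁ q₈ q₃ + nu6 q₅ q₈ q₇ q₃ q₂ q₁) = lam • q₄ + c)
    (h₅ : (1 / 2 : ℝ) • (nu3 q₂ q₇ q₄ + nu3 q₁ q₆ q₈ + nu6 q₆ q₇ q₈ q₄ q₁ q₂) = lam • q₅ + c)
    (h₆ : (1 / 2 : ℝ) • (nu3 q₃ q₈ q₁ + nu3 q₂ q₇ q₅ + nu6 q₇ q₈ q₅ q₁ q₂ q₃) = lam • q₆ + c)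
    (h₇ : (1 / 2 : ℝ) • (nu3 q₄ q₅ q₂ + nu3 q₃ q₈ q₆ + nu6 q₈ q₅ q₆ q₂ q₃ q₄) = lam • q₇ + c)
    (h₈ : (1 / 2 : ℝ) • (nu3 q₁ q₆ q₃ + nu3 q₄ q₅ q₇ + nu6 q₅ q₆ q₇ q₃ q₄ q₁) = lam • q₈ + c) :
    ∃ (r : ℝ) (_ : 0 < r) (R : E3 ≃ₗᵢ[ℝ] E3) (b : E3),
      q₁ = r • R (v3 0 0 0) + b ∧
      q₂ = r • R (v3 1 0 0) + b ∧
      q₃ = r • R (v3 1 1 0) + b ∧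
      q₄ = r • R (v3 0 1 0) + b ∧
      q₅ = r • R (v3 0 0 1) + b ∧
      q₆ = r • R (v3 1 0 1) + b ∧
      q₇ = r • R (v3 1 1 1) + b ∧
      q₈ = r • R (v3 0 1 1) + b := by
  -- choose the center m with lam • m + c = 0
  obtain ⟨m, hmc⟩ : ∃ m : E3, lam • m + c = 0 :=
    ⟨-(lam⁻¹ • c), by rw [smul_neg, smul_smul, mul_inv_cancel₀ hlam, one_smul]; abel⟩
  -- central symmetry
  have k₁ := eq_sub_of_add_eq h₁.symm
  have k₂ := eq_sub_of_add_eq h₂.symm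
  have k₃ := eq_sub_of_add_eq h₃.symm
  have k₄ := eq_sub_of_add_eq h₄.symm
  have k₅ := eq_sub_of_add_eq h₅.symm
  have k₆ := eq_sub_of_add_eq h₆.symm
  have k₇ := eq_sub_of_add_eq h₇.symm
  have k₈ := eq_sub_of_add_eq h₈.symm
  have c17 : lam • q₁ + lam • q₇ + c + c = 0 := by
    rw [k₁, k₇]; ext i; fin_cases i <;> simp [nu3, nu6, cross] <;> ring
  have c28 : lam • q₂ + lam • q₈ + c + c = 0 := by
    rw [k₂, k₈]; ext i; fin_cases i <;> simp [nu3, nu6, cross] <;> ring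
  have c35 : lam • q₃ + lam • q₅ + c + c = 0 := by
    rw [k₃, k₅]; ext i; fin_cases i <;> simp [nu3, nu6, cross] <;> ring
  have c46 : lam • q₄ + lam • q₆ + c + c = 0 := by
    rw [k₄, k₆]; ext i; fin_cases i <;> simp [nu3, nu6, cross] <;> ring
  have e7 : q₇ = (2:ℝ) • m - q₁ :=
    smul_right_injective E3 hlam (by linear_combination (norm := module) c17 - (2:ℝ) • hmc)
  have e8 : q₈ = (2:ℝ) • m - q₂ :=
    smul_right_injective E3 hlam (by linear_combination (norm := module) c28 - (2:ℝ) • hmc)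
  have e5 : q₅ = (2:ℝ) • m - q₃ :=
    smul_right_injective E3 hlam (by linear_combination (norm := module) c35 - (2:ℝ) • hmc)
  have e6 : q₆ = (2:ℝ) • m - q₄ :=
    smul_right_injective E3 hlam (by linear_combination (norm := module) c46 - (2:ℝ) • hmc)
  clear k₁ k₂ k₃ k₄ k₅ k₆ k₇ k₈ c17 c28 c35 c46
  subst e5; subst e6; subst e7; subst e8
  -- the base face is a parallelogram
  have j₁ := eq_sub_of_add_eq h₁.symm
  have j₂ := eq_sub_of_add_eq h₂.symm
  have j₃ := eq_sub_of_add_eq h₃.symm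
  have j₄ := eq_sub_of_add_eq h₄.symm
  have c0 : lam • q₁ + lam • q₃ - lam • q₂ - lam • q₄ = 0 := by
    rw [j₁, j₂, j₃, j₄]; ext i; fin_cases i <;> simp [nu3, nu6, cross] <;> ring
  have e4 : q₄ = q₁ + q₃ - q₂ :=
    smul_right_injective E3 hlam (by linear_combination (norm := module) -c0)
  clear j₁ j₂ j₃ j₄ c0
  subst e4
  -- the three structural cross-product equations
  have l₁ := eq_sub_of_add_eq h₁.symm
  have l₂ := eq_sub_of_add_eq h₂.symm
  have l₃ := eq_sub_of_add_eq h₃.symm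
  have l₄ := eq_sub_of_add_eq h₄.symm
  have cA : lam • q₁ + lam • q₃ + c + c =
      (-2:ℝ) • cross (q₃ - q₁) (q₁ + q₃ - (2:ℝ) • q₂) := by
    rw [l₁, l₃]; ext i; fin_cases i <;> simp [nu3, nu6, cross] <;> ring
  have cB : lam • q₃ - lam • q₁ =
      (4:ℝ) • cross (q₁ + q₃ - (2:ℝ) • m) (q₁ + q₃ - (2:ℝ) • q₂) := by
    rw [l₁, l₃]; ext i; fin_cases i <;> simp [nu3, nu6, cross] <;> ring
  have cC : lam • (q₁ + q₃ - q₂) - lam • q₂ =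
      (-4:ℝ) • cross (q₁ + q₃ - (2:ℝ) • m) (q₃ - q₁) := by
    rw [l₂, l₄]; ext i; fin_cases i <;> simp [nu3, nu6, cross] <;> ring
  have hA : lam • (q₁ + q₃ - (2:ℝ) • m) =
      (-2:ℝ) • cross (q₃ - q₁) (q₁ + q₃ - (2:ℝ) • q₂) := by
    linear_combination (norm := module) cA - (2:ℝ) • hmc
  have hB : lam • (q₃ - q₁) =
      (4:ℝ) • cross (q₁ + q₃ - (2:ℝ) • m) (q₁ + q₃ - (2:ℝ) • q₂) := by
    linear_combination (norm := module) cB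
  have hC : lam • (q₁ + q₃ - (2:ℝ) • q₂) =
      (-4:ℝ) • cross (q₁ + q₃ - (2:ℝ) • m) (q₃ - q₁) := by
    linear_combination (norm := module) cC
  clear l₁ l₂ l₃ l₄ cA cB cC h₁ h₂ h₃ h₄ h₅ h₆ h₇ h₈
  -- nondegeneracy
  have hT0 : q₁ + q₃ - (2:ℝ) • m ≠ 0 := by
    intro h0
    rw [h0, crossZeroLeft, smul_zero] at hB hC
    have hd1 : q₃ = q₁ := sub_eq_zero.mp ((smul_eq_zero.mp hB).resolve_left hlam)
    have hd2 : q₁ + q₃ - (2:ℝ) • q₂ = 0 := (smul_eq_zero.mp hC).resolve_left hlam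
    have hq2 : q₂ = q₁ :=
      smul_right_injective E3 (two_ne_zero : (2:ℝ) ≠ 0)
        (by linear_combination (norm := module) -hd2 + hd1)
    have hm : m = q₁ :=
      smul_right_injective E3 (two_ne_zero : (2:ℝ) ≠ 0)
        (by linear_combination (norm := module) -h0 + hd1)
    refine hne ⟨hq2.symm, hd1.symm, ?_, ?_, ?_, ?_, ?_⟩
    · linear_combination (norm := module) hq2 - hd1
    · linear_combination (norm := module) -(2:ℝ) • hm + hd1
    · linear_combination (norm := module) -(2:ℝ) • hm + hd1 - hq2
    · linear_combination (norm := module) -(2:ℝ) • hm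
    · linear_combination (norm := module) -(2:ℝ) • hm + hq2
  have hd1ne : q₃ - q₁ ≠ 0 := by
    intro h0
    rw [h0, crossZeroLeft, smul_zero] at hA
    exact hT0 ((smul_eq_zero.mp hA).resolve_left hlam)
  have hd2ne : q₁ + q₃ - (2:ℝ) • q₂ ≠ 0 := by
    intro h0
    rw [h0, crossZeroRight, smul_zero] at hA
    exact hT0 ((smul_eq_zero.mp hA).resolve_left hlam)
  -- orthogonality relations
  have o1 : ⟪q₁ + q₃ - (2:ℝ) • m, q₃ - q₁⟫ = 0 := by
    apply mul_left_cancel₀ hlam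
    rw [mul_zero, ← real_inner_smul_right, hB, real_inner_smul_right, innerCrossSelfLeft,
      mul_zero]
  have o2 : ⟪q₁ + q₃ - (2:ℝ) • m, q₁ + q₃ - (2:ℝ) • q₂⟫ = 0 := by
    apply mul_left_cancel₀ hlam
    rw [mul_zero, ← real_inner_smul_right, hC, real_inner_smul_right, innerCrossSelfLeft,
      mul_zero]
  have o3 : ⟪q₃ - q₁, q₁ + q₃ - (2:ℝ) • q₂⟫ = 0 := by
    have h' : ⟪q₁ + q₃ - (2:ℝ) • q₂, q₃ - q₁⟫ = 0 := by
      apply mul_left_cancel₀ hlam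
      rw [mul_zero, ← real_inner_smul_right, hB, real_inner_smul_right, innerCrossSelfRight,
        mul_zero]
    rwa [real_inner_comm]
  -- norm relations
  have s1 : lam^2 * ⟪q₃ - q₁, q₃ - q₁⟫ =
      16 * (⟪q₁ + q₃ - (2:ℝ) • m, q₁ + q₃ - (2:ℝ) • m⟫ *
        ⟪q₁ + q₃ - (2:ℝ) • q₂, q₁ + q₃ - (2:ℝ) • q₂⟫) := by
    have h := congrArg (fun v : E3 => (⟪v, v⟫ : ℝ)) hB
    simp only [real_inner_smul_left, real_inner_smul_right] at h
    rw [innerCrossCross, o2] at h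
    linear_combination h
  have s2 : lam^2 * ⟪q₁ + q₃ - (2:ℝ) • q₂, q₁ + q₃ - (2:ℝ) • q₂⟫ =
      16 * (⟪q₁ + q₃ - (2:ℝ) • m, q₁ + q₃ - (2:ℝ) • m⟫ * ⟪q₃ - q₁, q₃ - q₁⟫) := by
    have h := congrArg (fun v : E3 => (⟪v, v⟫ : ℝ)) hC
    simp only [real_inner_smul_left, real_inner_smul_right] at h
    rw [innerCrossCross, o1] at h
    linear_combination h
  have s3 : lam^2 * ⟪q₁ + q₃ - (2:ℝ) • m, q₁ + q₃ - (2:ℝ) • m⟫ =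
      4 * (⟪q₃ - q₁, q₃ - q₁⟫ * ⟪q₁ + q₃ - (2:ℝ) • q₂, q₁ + q₃ - (2:ℝ) • q₂⟫) := by
    have h := congrArg (fun v : E3 => (⟪v, v⟫ : ℝ)) hA
    simp only [real_inner_smul_left, real_inner_smul_right] at h
    rw [innerCrossCross, o3] at h
    linear_combination h
  -- abbreviate the three squared norms
  obtain ⟨T, hT⟩ : ∃ x : ℝ, ⟪q₁ + q₃ - (2:ℝ) • m, q₁ + q₃ - (2:ℝ) • m⟫ = x := ⟨_, rfl⟩
  obtain ⟨D₁, hD₁⟩ : ∃ x : ℝ, ⟪q₃ - q₁, q₃ - q₁⟫ = x := ⟨_, rfl⟩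
  obtain ⟨D₂, hD₂⟩ : ∃ x : ℝ, ⟪q₁ + q₃ - (2:ℝ) • q₂, q₁ + q₃ - (2:ℝ) • q₂⟫ = x := ⟨_, rfl⟩
  rw [hT, hD₁, hD₂] at s1 s2 s3
  have hTpos : 0 < T := by
    rw [← hT, real_inner_self_eq_norm_sq]; exact pow_pos (norm_pos_iff.2 hT0) 2
  have hD₁pos : 0 < D₁ := by
    rw [← hD₁, real_inner_self_eq_norm_sq]; exact pow_pos (norm_pos_iff.2 hd1ne) 2
  have hD₂pos : 0 < D₂ := by
    rw [← hD₂, real_inner_self_eq_norm_sq]; exact pow_pos (norm_pos_iff.2 hd2ne) 2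
  have hLpos : 0 < lam^2 :=
    lt_of_le_of_ne (sq_nonneg lam) (Ne.symm (pow_ne_zero 2 hlam))
  -- solve the scalar system
  have hDD : D₁ = D₂ := by
    have h0 : (lam^2 + 16*T) * (D₁ - D₂) = 0 := by linear_combination s1 - s2
    rcases mul_eq_zero.mp h0 with h | h
    · nlinarith
    · linarith
  have hL16 : lam^2 = 16*T := by
    have h0 : (lam^2 - 16*T) * D₁ = 0 := by linear_combination s1 - 16*T*hDD
    rcases mul_eq_zero.mp h0 with h | h
    · linarith
    · linarith
  have hD₁T : D₁ = 2*T := by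
    rw [← hDD] at s3
    rw [hL16] at s3
    have h0 : (D₁ - 2*T) * (D₁ + 2*T) = 0 := by linear_combination (-1/4 : ℝ) * s3
    rcases mul_eq_zero.mp h0 with h | h
    · linarith
    · linarith
  have hD₂T : D₂ = 2*T := hDD ▸ hD₁T
  -- the scale
  obtain ⟨r, hr⟩ : ∃ x : ℝ, ‖q₁ + q₃ - (2:ℝ) • m‖ = x := ⟨_, rfl⟩
  have hrpos : 0 < r := hr ▸ norm_pos_iff.2 hT0
  have hrne : r ≠ 0 := ne_of_gt hrpos
  have hTr : T = r^2 := by rw [← hT, ← hr, real_inner_self_eq_norm_sq]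
  -- inner products of the (unnormalized) frame
  have hD1r : ⟪q₃ - q₁, q₃ - q₁⟫ = 2*r^2 := by rw [hD₁, hD₁T, hTr]
  have hD2r : ⟪q₁ + q₃ - (2:ℝ) • q₂, q₁ + q₃ - (2:ℝ) • q₂⟫ = 2*r^2 := by
    rw [hD₂, hD₂T, hTr]
  have hTT : ⟪q₁ + q₃ - (2:ℝ) • m, q₁ + q₃ - (2:ℝ) • m⟫ = r^2 := by rw [hT, hTr]
  have hAA : ⟪q₂ - q₁, q₂ - q₁⟫ = r^2 := by
    simp only [PiLp.inner_apply, RCLike.inner_apply, conj_trivial, PiLp.sub_apply,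
      PiLp.add_apply, PiLp.smul_apply, smul_eq_mul, Fin.sum_univ_three] at o3 hD1r hD2r ⊢
    linarith [o3, hD1r, hD2r]
  have hBB : ⟪q₃ - q₂, q₃ - q₂⟫ = r^2 := by
    simp only [PiLp.inner_apply, RCLike.inner_apply, conj_trivial, PiLp.sub_apply,
      PiLp.add_apply, PiLp.smul_apply, smul_eq_mul, Fin.sum_univ_three] at o3 hD1r hD2r ⊢
    linarith [o3, hD1r, hD2r]
  have hCC : ⟪(2:ℝ) • m - q₁ - q₃, (2:ℝ) • m - q₁ - q₃⟫ = r^2 := by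
    simp only [PiLp.inner_apply, RCLike.inner_apply, conj_trivial, PiLp.sub_apply,
      PiLp.add_apply, PiLp.smul_apply, smul_eq_mul, Fin.sum_univ_three] at hTT ⊢
    linarith [hTT]
  have hAB : ⟪q₂ - q₁, q₃ - q₂⟫ = 0 := by
    simp only [PiLp.inner_apply, RCLike.inner_apply, conj_trivial, PiLp.sub_apply,
      PiLp.add_apply, PiLp.smul_apply, smul_eq_mul, Fin.sum_univ_three] at hD1r hD2r ⊢
    linarith [hD1r, hD2r]
  have hAC : ⟪q₂ - q₁, (2:ℝ) • m - q₁ - q₃⟫ = 0 := by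
    simp only [PiLp.inner_apply, RCLike.inner_apply, conj_trivial, PiLp.sub_apply,
      PiLp.add_apply, PiLp.smul_apply, smul_eq_mul, Fin.sum_univ_three] at o1 o2 ⊢
    linarith [o1, o2]
  have hBC : ⟪q₃ - q₂, (2:ℝ) • m - q₁ - q₃⟫ = 0 := by
    simp only [PiLp.inner_apply, RCLike.inner_apply, conj_trivial, PiLp.sub_apply,
      PiLp.add_apply, PiLp.smul_apply, smul_eq_mul, Fin.sum_univ_three] at o1 o2 ⊢
    linarith [o1, o2]
  -- the orthonormal frame
  have key1 : ∀ X Y : E3, ⟪X,Y⟫ = r^2 → ⟪r⁻¹ • X, r⁻¹ • Y⟫ = 1 := by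
    intro X Y h
    rw [real_inner_smul_left, real_inner_smul_right, h]
    field_simp
  have key0 : ∀ X Y : E3, ⟪X,Y⟫ = 0 → ⟪r⁻¹ • X, r⁻¹ • Y⟫ = 0 := by
    intro X Y h
    rw [real_inner_smul_left, real_inner_smul_right, h]; ring
  have hon : Orthonormal ℝ
      (![r⁻¹ • (q₂ - q₁), r⁻¹ • (q₃ - q₂), r⁻¹ • ((2:ℝ) • m - q₁ - q₃)] : Fin 3 → E3) := by
    rw [orthonormal_iff_ite]
    intro i j
    fin_cases i <;> fin_cases j
    · exact (key1 _ _ hAA).trans (by simp [Fin.ext_iff])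
    · exact (key0 _ _ hAB).trans (by simp [Fin.ext_iff])
    · exact (key0 _ _ hAC).trans (by simp [Fin.ext_iff])
    · exact (key0 _ _ (by rw [real_inner_comm]; exact hAB)).trans (by simp [Fin.ext_iff])
    · exact (key1 _ _ hBB).trans (by simp [Fin.ext_iff])
    · exact (key0 _ _ hBC).trans (by simp [Fin.ext_iff])
    · exact (key0 _ _ (by rw [real_inner_comm]; exact hAC)).trans (by simp [Fin.ext_iff])
    · exact (key0 _ _ (by rw [real_inner_comm]; exact hBC)).trans (by simp [Fin.ext_iff])
    · exact (key1 _ _ hCC).trans (by simp [Fin.ext_iff])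
  -- build the isometry
  have hcard : Fintype.card (Fin 3) = Module.finrank ℝ E3 := by
    simp [finrank_euclideanSpace_fin]
  set u : Fin 3 → E3 :=
    ![r⁻¹ • (q₂ - q₁), r⁻¹ • (q₃ - q₂), r⁻¹ • ((2:ℝ) • m - q₁ - q₃)] with hu
  have hbas : ⇑(basisOfOrthonormalOfCardEqFinrank hon hcard) = u :=
    coe_basisOfOrthonormalOfCardEqFinrank hon hcard
  set OB : OrthonormalBasis (Fin 3) ℝ E3 :=
    (basisOfOrthonormalOfCardEqFinrank hon hcard).toOrthonormalBasis (by rwa [hbas])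
    with hOBdef
  have hOBfun : ⇑OB = u := by
    rw [hOBdef, Module.Basis.coe_toOrthonormalBasis, hbas]
  have hOB0 : OB 0 = r⁻¹ • (q₂ - q₁) := (congrFun hOBfun 0).trans rfl
  have hOB1 : OB 1 = r⁻¹ • (q₃ - q₂) := (congrFun hOBfun 1).trans rfl
  have hOB2 : OB 2 = r⁻¹ • ((2:ℝ) • m - q₁ - q₃) := (congrFun hOBfun 2).trans rfl
  have hRv : ∀ x y z : ℝ, OB.repr.symm (v3 x y z) =
      x • (r⁻¹ • (q₂ - q₁)) + y • (r⁻¹ • (q₃ - q₂)) +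
        z • (r⁻¹ • ((2:ℝ) • m - q₁ - q₃)) := by
    intro x y z
    rw [v3Decomp]
    simp only [map_add, LinearIsometryEquiv.map_smul, OrthonormalBasis.repr_symm_single,
      hOB0, hOB1, hOB2]
  refine ⟨r, hrpos, OB.repr.symm, q₁, ?_, ?_, ?_, ?_, ?_, ?_, ?_, ?_⟩
  · rw [hRv]; match_scalars <;> field_simp <;> ring
  · rw [hRv]; match_scalars <;> field_simp <;> ring
  · rw [hRv]; match_scalars <;> field_simp <;> ring
  · rw [hRv]; match_scalars <;> field_simp <;> ring
  · rw [hRv]; match_scalars <;> field_simp <;> ring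
  · rw [hRv]; match_scalars <;> field_simp <;> ring
  · rw [hRv]; match_scalars <;> field_simp <;> ring
  · rw [hRv]; match_scalars <;> field_simp <;> ring
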